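/- Let M be a local Moufang set with basis (0,∞). Then G decomposes as the disjoint union G = U_0 H U_∞ ⊔ U_0 H τ U_0^∘, where H is the Hua subgroup and τ a fixed μ-map; consequently the point stabilizer satisfies G_0 = U_0 H, and the two-point stabilizer satisfies G_{0,∞} = H. -/

import Mathlib

/-!
Local Moufang sets, following E. Rijcken, "Local Moufang sets".
A local Moufang set is a set `X` with an equivalence relation (a `Setoid`)
having more than 2 classes, together with root groups `U x` of
equivalence-preserving permutations, satisfying (LM0), (LM1), (LM1'), (LM2).
We use left actions; the paper's right-composition word `a₁a₂⋯aₙ` corresponds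
to our product `aₙ * ⋯ * a₁`, and the paper's conjugation `g^h = h⁻¹gh`
corresponds to `h * g * h⁻¹` (i.e. `MulAut.conj h g`).
-/

variable {X : Type*}

/-- A permutation of `X` preserves the equivalence relation `r`. -/
def PreservesRel (r : Setoid X) (g : Equiv.Perm X) : Prop :=
  ∀ a b : X, r.r a b ↔ r.r (g a) (g b)

/-- A local pre-Moufang set: axioms (LM0), (LM1), (LM1'). -/
structure IsLocalPreMoufangSet (r : Setoid X) (U : X → Subgroup (Equiv.Perm X)) : Prop where
  /-- `X` has more than two equivalence classes. -/
  big : ∃ a b c : X, ¬ r.r a b ∧ ¬ r.r a c ∧ ¬ r.r b c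
  /-- root groups consist of equivalence-preserving permutations -/
  preserves : ∀ x : X, ∀ g ∈ U x, PreservesRel r g
  /-- (LM0): if `x ∼ y` then the induced actions of `U x` and `U y` on the quotient agree -/
  lm0 : ∀ x y : X, r.r x y → ∀ g ∈ U x, ∃ h ∈ U y, ∀ a : X, r.r (g a) (h a)
  /-- (LM1): `U x` fixes `x` ... -/
  fixes : ∀ x : X, ∀ g ∈ U x, g x = x
  /-- (LM1): ... and acts sharply transitively on the complement of the class of `x` -/
  lm1 : ∀ x a b : X, ¬ r.r a x → ¬ r.r b x → ∃! g : Equiv.Perm X, g ∈ U x ∧ g a = b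
  /-- (LM1'): the induced action on the quotient is transitive away from the class of `x` ... -/
  lm1'_trans : ∀ x a b : X, ¬ r.r a x → ¬ r.r b x → ∃ g ∈ U x, r.r (g a) b
  /-- (LM1'): ... and sharply so -/
  lm1'_sharp : ∀ x : X, ∀ g ∈ U x, ∀ h ∈ U x, ∀ a : X, ¬ r.r a x →
    r.r (g a) (h a) → ∀ b : X, r.r (g b) (h b)

/-- A local Moufang set: a local pre-Moufang set satisfying (LM2). -/
structure IsLocalMoufangSet (r : Setoid X) (U : X → Subgroup (Equiv.Perm X))
    extends IsLocalPreMoufangSet r U : Prop where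
  /-- (LM2): `U x ^ g = U (x g)` for all `g` in the little projective group `⟨U y : y⟩` -/
  lm2 : ∀ x : X, ∀ g ∈ (⨆ y : X, U y), (U x).map (MulAut.conj g).toMonoidHom = U (g x)

/-- `μ` is the μ-map of the point `x` w.r.t. the basis `(o, i) = (0, ∞)`:
it lies in the double coset `U 0 · α_x · U 0` (where `α_x` is the unique element
of `U ∞` with `0 · α_x = x`) and interchanges `0` and `∞`. -/
def IsMuMap (U : X → Subgroup (Equiv.Perm X)) (o i x : X) (μ : Equiv.Perm X) : Prop :=
  ∃ a : Equiv.Perm X, a ∈ U i ∧ a o = x ∧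
    (∃ u ∈ U o, ∃ v ∈ U o, μ = u * a * v) ∧ μ o = i ∧ μ i = o

/-- The Hua subgroup `H = ⟨μ_x μ_y : x, y units⟩` w.r.t. the basis `(o, i) = (0, ∞)`. -/
def HuaSubgroup (r : Setoid X) (U : X → Subgroup (Equiv.Perm X)) (o i : X) :
    Subgroup (Equiv.Perm X) :=
  Subgroup.closure {g | ∃ x y μx μy, (¬ r.r x o ∧ ¬ r.r x i) ∧ (¬ r.r y o ∧ ¬ r.r y i) ∧
    IsMuMap U o i x μx ∧ IsMuMap U o i y μy ∧ g = μx * μy}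

theorem Equiv.Perm.apply_inv_self {α : Type*} (f : Equiv.Perm α) (x : α) : f (f⁻¹ x) = x :=
  Equiv.apply_symm_apply f x

theorem Equiv.Perm.inv_apply_self {α : Type*} (f : Equiv.Perm α) (x : α) : f⁻¹ (f x) = x :=
  Equiv.symm_apply_apply f x

namespace S7

variable {X : Type*} {r : Setoid X} {U : X → Subgroup (Equiv.Perm X)} {o i : X}
  {τ : Equiv.Perm X}

/-- class-trivial permutation -/
def Triv (r : Setoid X) (g : Equiv.Perm X) : Prop := ∀ b, r.r (g b) b

theorem Triv.mul {g h : Equiv.Perm X} (hg : Triv r g) (hh : Triv r h) : Triv r (g * h) :=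
  fun b => by
    rw [Equiv.Perm.mul_apply]
    exact r.iseqv.trans (hg (h b)) (hh b)

theorem Triv.inv {g : Equiv.Perm X} (hg : Triv r g) : Triv r g⁻¹ := fun b => by
  have := hg (g⁻¹ b)
  rw [Equiv.Perm.apply_inv_self] at this
  exact r.iseqv.symm this

theorem pres_inv {g : Equiv.Perm X} (hg : PreservesRel r g) : PreservesRel r g⁻¹ :=
  fun a b => by
    have h := hg (g⁻¹ a) (g⁻¹ b)
    rw [Equiv.Perm.apply_inv_self, Equiv.Perm.apply_inv_self] at h
    exact h.symm

theorem Triv.conj {g k : Equiv.Perm X} (hg : PreservesRel r g) (hk : Triv r k) :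
    Triv r (g * k * g⁻¹) := fun b => by
  simp only [Equiv.Perm.mul_apply]
  have h2 := (hg (k (g⁻¹ b)) (g⁻¹ b)).mp (hk (g⁻¹ b))
  rwa [Equiv.Perm.apply_inv_self] at h2

theorem inv_fix {g : Equiv.Perm X} {p : X} (h : g p = p) : g⁻¹ p = p :=
  (congrArg (fun z => g⁻¹ z) h).symm.trans (Equiv.Perm.inv_apply_self g p)

theorem presG (hM : IsLocalMoufangSet r U) {g : Equiv.Perm X} (hg : g ∈ ⨆ z : X, U z) :
    PreservesRel r g := by
  rw [Subgroup.iSup_eq_closure] at hg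
  induction hg using Subgroup.closure_induction with
  | mem x hx =>
    rw [Set.mem_iUnion] at hx
    obtain ⟨z, hz⟩ := hx
    exact hM.preserves z x hz
  | one => intro a b; simp
  | mul x y hx hy ihx ihy =>
    intro a b
    simp only [Equiv.Perm.mul_apply]
    exact (ihy a b).trans (ihx (y a) (y b))
  | inv x hx ih => exact pres_inv ih

theorem memG {p : X} {g : Equiv.Perm X} (h : g ∈ U p) : g ∈ ⨆ z : X, U z :=
  Subgroup.mem_iSup_of_mem p h

theorem conjU (hM : IsLocalMoufangSet r U) {g : Equiv.Perm X} {p : X} {b : Equiv.Perm X}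
    (hg : g ∈ ⨆ z : X, U z) (hb : b ∈ U p) : g * b * g⁻¹ ∈ U (g p) := by
  rw [← hM.lm2 p g hg]
  exact Subgroup.mem_map.mpr ⟨b, hb, by simp [MulAut.conj_apply]⟩

theorem conjU' (hM : IsLocalMoufangSet r U) {g : Equiv.Perm X} {p q : X} {b : Equiv.Perm X}
    (hg : g ∈ ⨆ z : X, U z) (hb : b ∈ U p) (hq : g p = q) : g * b * g⁻¹ ∈ U q :=
  hq ▸ conjU hM hg hb

theorem conjU'' (hM : IsLocalMoufangSet r U) {g : Equiv.Perm X} {p q : X} {b : Equiv.Perm X}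
    (hg : g ∈ ⨆ z : X, U z) (hb : b ∈ U p) (hq : g⁻¹ p = q) : g⁻¹ * b * g ∈ U q := by
  have h := conjU hM (inv_mem hg) hb
  rwa [inv_inv, hq] at h

theorem fixU (hM : IsLocalMoufangSet r U) {p : X} {b : Equiv.Perm X} (hb : b ∈ U p) : b p = p :=
  hM.fixes p b hb

theorem trivUi (hM : IsLocalMoufangSet r U) (hoi : ¬ r.r o i) {v : Equiv.Perm X}
    (hv : v ∈ U i) (h : r.r (v o) o) : Triv r v := fun b => by
  have h2 := hM.lm1'_sharp i v hv 1 (one_mem _) o hoi (by simpa using h) b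
  simpa using h2

theorem trivUo (hM : IsLocalMoufangSet r U) (hio : ¬ r.r i o) {c : Equiv.Perm X}
    (hc : c ∈ U o) (h : r.r (c i) i) : Triv r c := fun b => by
  have h2 := hM.lm1'_sharp o c hc 1 (one_mem _) i hio (by simpa using h) b
  simpa using h2

theorem uniqU (hM : IsLocalMoufangSet r U) {p a b : X} {g₁ g₂ : Equiv.Perm X}
    (ha : ¬ r.r a p) (hb : ¬ r.r b p) (h₁ : g₁ ∈ U p) (e₁ : g₁ a = b)
    (h₂ : g₂ ∈ U p) (e₂ : g₂ a = b) : g₁ = g₂ :=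
  (hM.lm1 p a b ha hb).unique ⟨h₁, e₁⟩ ⟨h₂, e₂⟩

theorem mem_H_gen {x y : X} {μx μy : Equiv.Perm X} (hx : ¬ r.r x o ∧ ¬ r.r x i)
    (hy : ¬ r.r y o ∧ ¬ r.r y i) (hmx : IsMuMap U o i x μx) (hmy : IsMuMap U o i y μy) :
    μx * μy ∈ HuaSubgroup r U o i :=
  Subgroup.subset_closure ⟨x, y, μx, μy, hx, hy, hmx, hmy, rfl⟩

theorem muMap_memG {x : X} {μ : Equiv.Perm X} (h : IsMuMap U o i x μ) : μ ∈ ⨆ z : X, U z := by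
  obtain ⟨a, ha, -, ⟨u, hu, v, hv, rfl⟩, -, -⟩ := h
  exact mul_mem (mul_mem (memG hu) (memG ha)) (memG hv)

theorem muMap_inv (hM : IsLocalMoufangSet r U) (hoi : ¬ r.r o i) {x : X} {μ : Equiv.Perm X}
    (hx : ¬ r.r x o ∧ ¬ r.r x i) (h : IsMuMap U o i x μ) :
    ∃ y, (¬ r.r y o ∧ ¬ r.r y i) ∧ IsMuMap U o i y μ⁻¹ := by
  obtain ⟨a, ha, hao, ⟨u, hu, v, hv, heq⟩, hμo, hμi⟩ := h
  have hpa : PreservesRel r a := hM.preserves i a ha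
  refine ⟨a⁻¹ o, ⟨?_, ?_⟩, a⁻¹, inv_mem ha, rfl,
    ⟨v⁻¹, inv_mem hv, u⁻¹, inv_mem hu, by rw [heq]; group⟩, ?_, ?_⟩
  · intro hcon
    have h2 := (hpa _ _).mp hcon
    rw [Equiv.Perm.apply_inv_self, hao] at h2
    exact hx.1 (r.iseqv.symm h2)
  · intro hcon
    have h2 := (hpa _ _).mp hcon
    rw [Equiv.Perm.apply_inv_self, fixU hM ha] at h2
    exact hoi h2
  · rw [← hμi, Equiv.Perm.inv_apply_self]
  · rw [← hμo, Equiv.Perm.inv_apply_self]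

theorem tau_G (hτ : ∃ e, ¬ r.r e o ∧ ¬ r.r e i ∧ IsMuMap U o i e τ) : τ ∈ ⨆ z : X, U z := by
  obtain ⟨e, -, -, hm⟩ := hτ
  exact muMap_memG hm

theorem tau_o (hτ : ∃ e, ¬ r.r e o ∧ ¬ r.r e i ∧ IsMuMap U o i e τ) : τ o = i := by
  obtain ⟨e, -, -, -, -, -, -, h1, -⟩ := hτ
  exact h1

theorem tau_i (hτ : ∃ e, ¬ r.r e o ∧ ¬ r.r e i ∧ IsMuMap U o i e τ) : τ i = o := by
  obtain ⟨e, -, -, -, -, -, -, -, h2⟩ := hτ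
  exact h2

theorem tau_inv_o (hτ : ∃ e, ¬ r.r e o ∧ ¬ r.r e i ∧ IsMuMap U o i e τ) : τ⁻¹ o = i := by
  rw [← tau_i hτ, Equiv.Perm.inv_apply_self]

theorem tau_inv_i (hτ : ∃ e, ¬ r.r e o ∧ ¬ r.r e i ∧ IsMuMap U o i e τ) : τ⁻¹ i = o := by
  rw [← tau_o hτ, Equiv.Perm.inv_apply_self]

theorem tausq_H (hτ : ∃ e, ¬ r.r e o ∧ ¬ r.r e i ∧ IsMuMap U o i e τ) :
    τ * τ ∈ HuaSubgroup r U o i := by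
  obtain ⟨e, heo, hei, hm⟩ := hτ
  exact mem_H_gen ⟨heo, hei⟩ ⟨heo, hei⟩ hm hm

theorem memG_of_H {h : Equiv.Perm X} (hh : h ∈ HuaSubgroup r U o i) : h ∈ ⨆ z : X, U z := by
  induction hh using Subgroup.closure_induction with
  | mem g hg =>
    obtain ⟨x, y, μx, μy, hx, hy, hmx, hmy, rfl⟩ := hg
    exact mul_mem (muMap_memG hmx) (muMap_memG hmy)
  | one => exact one_mem _
  | mul x y hx hy ihx ihy => exact mul_mem ihx ihy
  | inv x hx ih => exact inv_mem ih

theorem H_fix (hM : IsLocalMoufangSet r U) {h : Equiv.Perm X}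
    (hh : h ∈ HuaSubgroup r U o i) : h o = o ∧ h i = i := by
  induction hh using Subgroup.closure_induction with
  | mem g hg =>
    obtain ⟨x, y, μx, μy, hx, hy, hmx, hmy, rfl⟩ := hg
    obtain ⟨-, -, -, -, hxo, hxi⟩ := hmx
    obtain ⟨-, -, -, -, hyo, hyi⟩ := hmy
    constructor <;> simp [Equiv.Perm.mul_apply, hyo, hyi, hxo, hxi]
  | one => simp
  | mul x y hx hy ihx ihy =>
    constructor <;> simp [Equiv.Perm.mul_apply, ihy.1, ihy.2, ihx.1, ihx.2]
  | inv x hx ih =>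
    exact ⟨inv_fix ih.1, inv_fix ih.2⟩

theorem H_conj_tau (hM : IsLocalMoufangSet r U) (hoi : ¬ r.r o i)
    (hτ : ∃ e, ¬ r.r e o ∧ ¬ r.r e i ∧ IsMuMap U o i e τ) {h : Equiv.Perm X}
    (hh : h ∈ HuaSubgroup r U o i) :
    τ * h * τ⁻¹ ∈ HuaSubgroup r U o i ∧ τ⁻¹ * h * τ ∈ HuaSubgroup r U o i := by
  obtain ⟨e, heo, hei, hτμ⟩ := id hτ
  obtain ⟨e', he', hτinv⟩ := muMap_inv hM hoi ⟨heo, hei⟩ hτμ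
  induction hh using Subgroup.closure_induction with
  | mem g hg =>
    obtain ⟨x, y, μx, μy, hx, hy, hmx, hmy, rfl⟩ := hg
    constructor
    · have h1 : τ * μx ∈ HuaSubgroup r U o i := mem_H_gen ⟨heo, hei⟩ hx hτμ hmx
      have h2 : μy * τ⁻¹ ∈ HuaSubgroup r U o i := mem_H_gen hy he' hmy hτinv
      have h3 : τ * (μx * μy) * τ⁻¹ = (τ * μx) * (μy * τ⁻¹) := by group
      rw [h3]; exact mul_mem h1 h2
    · obtain ⟨x', hx', hμxinv⟩ := muMap_inv hM hoi hx hmx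
      have h1 : μx⁻¹ * τ ∈ HuaSubgroup r U o i := mem_H_gen hx' ⟨heo, hei⟩ hμxinv hτμ
      have h2 : μy * τ ∈ HuaSubgroup r U o i := mem_H_gen hy ⟨heo, hei⟩ hmy hτμ
      have h3 : τ⁻¹ * (μx * μy) * τ = (μx⁻¹ * τ)⁻¹ * (μy * τ) := by group
      rw [h3]; exact mul_mem (inv_mem h1) h2
  | one => constructor <;> simpa using one_mem _
  | mul x y hx hy ihx ihy =>
    constructor
    · have h3 : τ * (x * y) * τ⁻¹ = (τ * x * τ⁻¹) * (τ * y * τ⁻¹) := by group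
      rw [h3]; exact mul_mem ihx.1 ihy.1
    · have h3 : τ⁻¹ * (x * y) * τ = (τ⁻¹ * x * τ) * (τ⁻¹ * y * τ) := by group
      rw [h3]; exact mul_mem ihx.2 ihy.2
  | inv x hx ih =>
    constructor
    · have h3 : τ * x⁻¹ * τ⁻¹ = (τ * x * τ⁻¹)⁻¹ := by group
      rw [h3]; exact inv_mem ih.1
    · have h3 : τ⁻¹ * x⁻¹ * τ = (τ⁻¹ * x * τ)⁻¹ := by group
      rw [h3]; exact inv_mem ih.2

/-- construction of μ-maps: given `a ∈ U i` with `a o = x` a unit. -/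
theorem mkMu (hM : IsLocalMoufangSet r U) (hoi : ¬ r.r o i) {a : Equiv.Perm X} {x : X}
    (ha : a ∈ U i) (hao : a o = x) (hx : ¬ r.r x o ∧ ¬ r.r x i) :
    ∃ u ∈ U o, ∃ c ∈ U o, (¬ Triv r u) ∧ u x = i ∧ c i = a⁻¹ o ∧
      IsMuMap U o i x (u * a * c) := by
  have hio : ¬ r.r i o := fun h => hoi (r.iseqv.symm h)
  obtain ⟨u, ⟨hu, hux⟩, -⟩ := hM.lm1 o x i hx.1 hio
  have hpa : PreservesRel r a := hM.preserves i a ha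
  have hinv : ¬ r.r (a⁻¹ o) o := by
    intro hcon
    have h2 := (hpa _ _).mp hcon
    rw [Equiv.Perm.apply_inv_self, hao] at h2
    exact hx.1 (r.iseqv.symm h2)
  obtain ⟨c, ⟨hc, hci⟩, -⟩ := hM.lm1 o i (a⁻¹ o) hio hinv
  refine ⟨u, hu, c, hc, ?_, hux, hci, a, ha, hao, ⟨u, hu, c, hc, rfl⟩, ?_, ?_⟩
  · intro hT
    have h2 := hT x
    rw [hux] at h2
    exact hx.2 (r.iseqv.symm h2)
  · simp only [Equiv.Perm.mul_apply]
    rw [fixU hM hc, hao, hux]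
  · simp only [Equiv.Perm.mul_apply]
    rw [hci, Equiv.Perm.apply_inv_self, fixU hM hu]

/-- every non-class-trivial element of `U i` lies in `U o (H τ) U o`. -/
theorem decompUi (hM : IsLocalMoufangSet r U) (hoi : ¬ r.r o i)
    (hτ : ∃ e, ¬ r.r e o ∧ ¬ r.r e i ∧ IsMuMap U o i e τ) {v : Equiv.Perm X}
    (hv : v ∈ U i) (hnf : ¬ r.r (v o) o) :
    ∃ u₁ ∈ U o, ∃ c₁ ∈ U o, ∃ h₁ ∈ HuaSubgroup r U o i,
      (¬ Triv r u₁) ∧ v = u₁⁻¹ * h₁ * τ * c₁⁻¹ := by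
  obtain ⟨e, heo, hei, hτμ⟩ := id hτ
  have hx : ¬ r.r (v o) o ∧ ¬ r.r (v o) i := by
    refine ⟨hnf, fun hcon => hoi ?_⟩
    exact (hM.preserves i v hv o i).mpr (by rwa [fixU hM hv])
  obtain ⟨u₁, hu₁, c₁, hc₁, hu₁nt, hu₁x, -, hμ⟩ := mkMu hM hoi hv rfl hx
  obtain ⟨e', he', hτinv⟩ := muMap_inv hM hoi ⟨heo, hei⟩ hτμ
  refine ⟨u₁, hu₁, c₁, hc₁, (u₁ * v * c₁) * τ⁻¹, mem_H_gen hx he' hμ hτinv, hu₁nt, by group⟩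

/-- the key decomposition of a class-trivial element of `U i`, relative to a chosen unit `x`. -/
theorem decompTriv (hM : IsLocalMoufangSet r U) (hoi : ¬ r.r o i)
    (hτ : ∃ e, ¬ r.r e o ∧ ¬ r.r e i ∧ IsMuMap U o i e τ) {v : Equiv.Perm X} {x : X}
    (hv : v ∈ U i) (hvT : Triv r v) (hx : ¬ r.r x o ∧ ¬ r.r x i) :
    ∃ k ∈ U o, ∃ u ∈ U o, ∃ h ∈ HuaSubgroup r U o i, ∃ v₂ ∈ U i,
      Triv r k ∧ Triv r v₂ ∧ (¬ Triv r u) ∧ u x = i ∧ v = (k * u)⁻¹ * h * v₂ * u := by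
  have hio : ¬ r.r i o := fun h => hoi (r.iseqv.symm h)
  obtain ⟨a, ⟨ha, hao⟩, -⟩ := hM.lm1 i o x hoi hx.2
  obtain ⟨u, hu, c, hc, hunt, hux, hci, hμ⟩ := mkMu hM hoi ha hao hx
  have ha' : v * a ∈ U i := mul_mem hv ha
  have ha'o : (v * a) o = v x := by rw [Equiv.Perm.mul_apply, hao]
  have hvx : r.r (v x) x := hvT x
  have hx' : ¬ r.r (v x) o ∧ ¬ r.r (v x) i := by
    constructor
    · exact fun hcon => hx.1 (r.iseqv.trans (r.iseqv.symm hvx) hcon)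
    · exact fun hcon => hx.2 (r.iseqv.trans (r.iseqv.symm hvx) hcon)
  obtain ⟨u', hu', c', hc', hu'nt, hu'x, hc'i, hμ'⟩ := mkMu hM hoi ha' ha'o hx'
  obtain ⟨y, hy, hμinv⟩ := muMap_inv hM hoi hx hμ
  have hH : (u' * (v * a) * c') * (u * a * c)⁻¹ ∈ HuaSubgroup r U o i :=
    mem_H_gen hx' hy hμ' hμinv
  have hpa : PreservesRel r a := hM.preserves i a ha
  -- Triv (c'⁻¹ * c)
  have hrel : r.r (c' i) (c i) := by
    rw [hc'i, hci]
    have h1 : (v * a)⁻¹ o = a⁻¹ (v⁻¹ o) := by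
      rw [mul_inv_rev, Equiv.Perm.mul_apply]
    rw [h1]
    exact (pres_inv hpa _ _).mp (Triv.inv hvT o)
  have hsharp := hM.lm1'_sharp o c' hc' c hc i hio hrel
  have hk₂ : Triv r (c'⁻¹ * c) := fun b => by
    have h2 := (pres_inv (hM.preserves o c' hc') _ _).mp (hsharp b)
    rw [Equiv.Perm.inv_apply_self] at h2
    rw [Equiv.Perm.mul_apply]
    exact r.iseqv.symm h2
  -- Triv (u' * u⁻¹)
  have hrelu : r.r (u' (v x)) (u (v x)) := by
    rw [hu'x]
    have h3 := (hM.preserves o u hu _ _).mp hvx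
    rw [hux] at h3
    exact r.iseqv.symm h3
  have hsharpu := hM.lm1'_sharp o u' hu' u hu (v x) hx'.1 hrelu
  have hk₁ : Triv r (u' * u⁻¹) := fun b => by
    have h2 := hsharpu (u⁻¹ b)
    rw [Equiv.Perm.apply_inv_self] at h2
    rw [Equiv.Perm.mul_apply]
    exact h2
  have hμG : (u * a * c) ∈ ⨆ z : X, U z := muMap_memG hμ
  obtain ⟨-, -, -, -, hμo, -⟩ := id hμ
  have hv₂U : (u * a * c) * (c'⁻¹ * c) * (u * a * c)⁻¹ ∈ U i :=
    conjU' hM hμG (mul_mem (inv_mem hc') hc) hμo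
  have hv₂T : Triv r ((u * a * c) * (c'⁻¹ * c) * (u * a * c)⁻¹) :=
    Triv.conj (presG hM hμG) hk₂
  refine ⟨u' * u⁻¹, mul_mem hu' (inv_mem hu), u, hu,
    (u' * (v * a) * c') * (u * a * c)⁻¹, hH,
    (u * a * c) * (c'⁻¹ * c) * (u * a * c)⁻¹, hv₂U,
    hk₁, hv₂T, hunt, hux, by group⟩


/-- the big cell `U i · H · U o` (in left-action order). -/
def InA (r : Setoid X) (U : X → Subgroup (Equiv.Perm X)) (o i : X) (g : Equiv.Perm X) : Prop :=
  ∃ v ∈ U i, ∃ h ∈ HuaSubgroup r U o i, ∃ u ∈ U o, g = v * h * u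

/-- the small cell `U o^∘ · τ · H · U o` (in left-action order). -/
def InB (r : Setoid X) (U : X → Subgroup (Equiv.Perm X)) (o i : X) (τ g : Equiv.Perm X) :
    Prop :=
  ∃ w ∈ U o, Triv r w ∧ ∃ h ∈ HuaSubgroup r U o i, ∃ u ∈ U o, g = w * τ * h * u

theorem InA_mulHU (hM : IsLocalMoufangSet r U) {g h u : Equiv.Perm X}
    (hg : InA r U o i g) (hh : h ∈ HuaSubgroup r U o i) (hu : u ∈ U o) :
    InA r U o i (g * h * u) := by
  obtain ⟨v, hv, h₀, hh₀, u₀, hu₀, rfl⟩ := hg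
  have hcu : h⁻¹ * u₀ * h ∈ U o :=
    conjU'' hM (memG_of_H hh) hu₀ (inv_fix (H_fix hM hh).1)
  exact ⟨v, hv, h₀ * h, mul_mem hh₀ hh, (h⁻¹ * u₀ * h) * u, mul_mem hcu hu, by group⟩

theorem InB_mulHU (hM : IsLocalMoufangSet r U) {g h u : Equiv.Perm X}
    (hg : InB r U o i τ g) (hh : h ∈ HuaSubgroup r U o i) (hu : u ∈ U o) :
    InB r U o i τ (g * h * u) := by
  obtain ⟨w, hw, hwT, h₀, hh₀, u₀, hu₀, rfl⟩ := hg
  have hcu : h⁻¹ * u₀ * h ∈ U o :=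
    conjU'' hM (memG_of_H hh) hu₀ (inv_fix (H_fix hM hh).1)
  exact ⟨w, hw, hwT, h₀ * h, mul_mem hh₀ hh, (h⁻¹ * u₀ * h) * u, mul_mem hcu hu, by group⟩

theorem T_mulHU (hM : IsLocalMoufangSet r U) {g h u : Equiv.Perm X}
    (hg : InA r U o i g ∨ InB r U o i τ g) (hh : h ∈ HuaSubgroup r U o i) (hu : u ∈ U o) :
    InA r U o i (g * h * u) ∨ InB r U o i τ (g * h * u) :=
  hg.imp (fun h' => InA_mulHU hM h' hh hu) (fun h' => InB_mulHU hM h' hh hu)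

theorem tauV (hM : IsLocalMoufangSet r U) (hoi : ¬ r.r o i)
    (hτ : ∃ e, ¬ r.r e o ∧ ¬ r.r e i ∧ IsMuMap U o i e τ) {v : Equiv.Perm X}
    (hv : v ∈ U i) (hnT : ¬ Triv r v) : InA r U o i (τ * v) := by
  have hnf : ¬ r.r (v o) o := fun h => hnT (trivUi hM hoi hv h)
  obtain ⟨u₁, hu₁, c₁, hc₁, h₁, hH₁, hu₁nt, hveq⟩ := decompUi hM hoi hτ hv hnf
  have hτG : τ ∈ ⨆ z : X, U z := tau_G hτ
  have hV₂ : τ * u₁⁻¹ * τ⁻¹ ∈ U i := conjU' hM hτG (inv_mem hu₁) (tau_o hτ)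
  have hH₂ : (τ * h₁ * τ⁻¹) * (τ * τ) ∈ HuaSubgroup r U o i :=
    mul_mem (H_conj_tau hM hoi hτ hH₁).1 (tausq_H hτ)
  refine ⟨τ * u₁⁻¹ * τ⁻¹, hV₂, (τ * h₁ * τ⁻¹) * (τ * τ), hH₂, c₁⁻¹, inv_mem hc₁, ?_⟩
  rw [hveq]; group

theorem Ctau_B {C : Equiv.Perm X} (hC : C ∈ U o) (hT : Triv r C) :
    InB r U o i τ (C * τ) :=
  ⟨C, hC, hT, 1, one_mem _, 1, one_mem _, by group⟩

theorem Ctau_A (hM : IsLocalMoufangSet r U) (hoi : ¬ r.r o i)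
    (hτ : ∃ e, ¬ r.r e o ∧ ¬ r.r e i ∧ IsMuMap U o i e τ) {C : Equiv.Perm X}
    (hC : C ∈ U o) (hnT : ¬ Triv r C) : InA r U o i (C * τ) := by
  have hτG : τ ∈ ⨆ z : X, U z := tau_G hτ
  have hv₁ : τ⁻¹ * C * τ ∈ U i := conjU'' hM hτG hC (tau_inv_o hτ)
  have hnT₁ : ¬ Triv r (τ⁻¹ * C * τ) := by
    intro hT
    apply hnT
    have h2 := Triv.conj (presG hM hτG) hT
    have heqq : τ * (τ⁻¹ * C * τ) * τ⁻¹ = C := by group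
    rwa [heqq] at h2
  have hA := tauV hM hoi hτ hv₁ hnT₁
  have heq2 : C * τ = τ * (τ⁻¹ * C * τ) := by group
  rwa [heq2]

theorem Mv (hM : IsLocalMoufangSet r U) (hoi : ¬ r.r o i)
    (hτ : ∃ e, ¬ r.r e o ∧ ¬ r.r e i ∧ IsMuMap U o i e τ) {c v : Equiv.Perm X}
    (hc : c ∈ U o) (hv : v ∈ U i) (hnT : ¬ Triv r v) :
    InA r U o i (c * v) ∨ InB r U o i τ (c * v) := by
  have hnf : ¬ r.r (v o) o := fun h => hnT (trivUi hM hoi hv h)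
  obtain ⟨u₁, hu₁, c₁, hc₁, h₁, hH₁, hu₁nt, hveq⟩ := decompUi hM hoi hτ hv hnf
  have hC : c * u₁⁻¹ ∈ U o := mul_mem hc (inv_mem hu₁)
  have hh' : τ⁻¹ * h₁ * τ ∈ HuaSubgroup r U o i := (H_conj_tau hM hoi hτ hH₁).2
  have key : c * v = ((c * u₁⁻¹) * τ) * (τ⁻¹ * h₁ * τ) * c₁⁻¹ := by rw [hveq]; group
  rw [key]
  by_cases hT : Triv r (c * u₁⁻¹)
  · exact Or.inr (InB_mulHU hM (Ctau_B hC hT) hh' (inv_mem hc₁))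
  · exact Or.inl (InA_mulHU hM (Ctau_A hM hoi hτ hC hT) hh' (inv_mem hc₁))

theorem Mv_A (hM : IsLocalMoufangSet r U) (hoi : ¬ r.r o i)
    (hτ : ∃ e, ¬ r.r e o ∧ ¬ r.r e i ∧ IsMuMap U o i e τ) {c v : Equiv.Perm X}
    (hc : c ∈ U o) (hcT : Triv r c) (hv : v ∈ U i) (hnT : ¬ Triv r v) :
    InA r U o i (c * v) := by
  have hnf : ¬ r.r (v o) o := fun h => hnT (trivUi hM hoi hv h)
  obtain ⟨u₁, hu₁, c₁, hc₁, h₁, hH₁, hu₁nt, hveq⟩ := decompUi hM hoi hτ hv hnf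
  have hC : c * u₁⁻¹ ∈ U o := mul_mem hc (inv_mem hu₁)
  have hCnT : ¬ Triv r (c * u₁⁻¹) := by
    intro hT
    apply hu₁nt
    have h2 : Triv r ((c * u₁⁻¹)⁻¹ * c) := Triv.mul (Triv.inv hT) hcT
    have h3 : (c * u₁⁻¹)⁻¹ * c = u₁ := by group
    rwa [h3] at h2
  have hh' : τ⁻¹ * h₁ * τ ∈ HuaSubgroup r U o i := (H_conj_tau hM hoi hτ hH₁).2
  have key : c * v = ((c * u₁⁻¹) * τ) * (τ⁻¹ * h₁ * τ) * c₁⁻¹ := by rw [hveq]; group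
  rw [key]
  exact InA_mulHU hM (Ctau_A hM hoi hτ hC hCnT) hh' (inv_mem hc₁)

theorem Mcc (hM : IsLocalMoufangSet r U) (hoi : ¬ r.r o i)
    (hτ : ∃ e, ¬ r.r e o ∧ ¬ r.r e i ∧ IsMuMap U o i e τ) {w v : Equiv.Perm X}
    (hw : w ∈ U o) (hwT : Triv r w) (hv : v ∈ U i) (hvT : Triv r v) :
    InA r U o i (w * v) := by
  obtain ⟨e, heo, hei, -⟩ := id hτ
  have hτG : τ ∈ ⨆ z : X, U z := tau_G hτ
  have hvt : τ * w * τ⁻¹ ∈ U i := conjU' hM hτG hw (tau_o hτ)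
  have hvtT : Triv r (τ * w * τ⁻¹) := Triv.conj (presG hM hτG) hwT
  obtain ⟨k, hk, u, hu, h, hH, v₂, hv₂, hkT, hv₂T, hunt, hux, heq⟩ :=
    decompTriv hM hoi hτ hvt hvtT ⟨heo, hei⟩
  have hw_eq : w = (τ⁻¹ * (k * u) * τ)⁻¹ * (τ⁻¹ * h * τ) * (τ⁻¹ * v₂ * τ) * (τ⁻¹ * u * τ) := by
    have h0 : w = τ⁻¹ * (τ * w * τ⁻¹) * τ := by group
    rw [h0, heq]; group
  have hVs : τ⁻¹ * (k * u) * τ ∈ U i := conjU'' hM hτG (mul_mem hk hu) (tau_inv_o hτ)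
  have hhs : τ⁻¹ * h * τ ∈ HuaSubgroup r U o i := (H_conj_tau hM hoi hτ hH).2
  have hW₂ : τ⁻¹ * v₂ * τ ∈ U o := conjU'' hM hτG hv₂ (tau_inv_i hτ)
  have hW₂T : Triv r (τ⁻¹ * v₂ * τ) := by
    have h2 := Triv.conj (pres_inv (presG hM hτG)) hv₂T
    rwa [inv_inv] at h2
  have hVss : τ⁻¹ * u * τ ∈ U i := conjU'' hM hτG hu (tau_inv_o hτ)
  have hVssnT : ¬ Triv r (τ⁻¹ * u * τ) := by
    intro hT
    apply hunt
    have h2 := Triv.conj (presG hM hτG) hT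
    have h3 : τ * (τ⁻¹ * u * τ) * τ⁻¹ = u := by group
    rwa [h3] at h2
  have hVv : (τ⁻¹ * u * τ) * v ∈ U i := mul_mem hVss hv
  have hVvnT : ¬ Triv r ((τ⁻¹ * u * τ) * v) := by
    intro hT
    apply hVssnT
    have h2 := Triv.mul hT (Triv.inv hvT)
    have h3 : ((τ⁻¹ * u * τ) * v) * v⁻¹ = τ⁻¹ * u * τ := by group
    rwa [h3] at h2
  obtain ⟨v', hv', h', hh', u', hu', heqA⟩ := Mv_A hM hoi hτ hW₂ hW₂T hVv hVvnT
  have hfixI : (τ⁻¹ * h * τ) i = i := (H_fix hM hhs).2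
  have hconj : (τ⁻¹ * h * τ) * v' * (τ⁻¹ * h * τ)⁻¹ ∈ U i :=
    conjU' hM (memG_of_H hhs) hv' hfixI
  refine ⟨(τ⁻¹ * (k * u) * τ)⁻¹ * ((τ⁻¹ * h * τ) * v' * (τ⁻¹ * h * τ)⁻¹),
    mul_mem (inv_mem hVs) hconj, (τ⁻¹ * h * τ) * h', mul_mem hhs hh', u', hu', ?_⟩
  have hwv : w * v =
      (τ⁻¹ * (k * u) * τ)⁻¹ * ((τ⁻¹ * h * τ) * ((τ⁻¹ * v₂ * τ) * ((τ⁻¹ * u * τ) * v))) := by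
    rw [hw_eq]; group
  rw [hwv, heqA]; group

theorem Mgen (hM : IsLocalMoufangSet r U) (hoi : ¬ r.r o i)
    (hτ : ∃ e, ¬ r.r e o ∧ ¬ r.r e i ∧ IsMuMap U o i e τ) {c v : Equiv.Perm X}
    (hc : c ∈ U o) (hv : v ∈ U i) :
    InA r U o i (c * v) ∨ InB r U o i τ (c * v) := by
  by_cases hvT : Triv r v
  · by_cases hcT : Triv r c
    · exact Or.inl (Mcc hM hoi hτ hc hcT hv hvT)
    · left
      have hio : ¬ r.r i o := fun h => hoi (r.iseqv.symm h)
      have hci : ¬ r.r (c i) i := fun hcon => hcT (trivUo hM hio hc hcon)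
      have hpc : PreservesRel r c := hM.preserves o c hc
      have hxu : ¬ r.r (c⁻¹ i) o ∧ ¬ r.r (c⁻¹ i) i := by
        constructor
        · intro hcon
          have h2 := (hpc _ _).mp hcon
          rw [Equiv.Perm.apply_inv_self, fixU hM hc] at h2
          exact hio h2
        · intro hcon
          have h2 := (hpc _ _).mp hcon
          rw [Equiv.Perm.apply_inv_self] at h2
          exact hci (r.iseqv.symm h2)
      obtain ⟨k, hk, u, hu, h, hH, v₂, hv₂, hkT, hv₂T, hunt, hux, heq⟩ :=
        decompTriv hM hoi hτ hv hvT hxu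
      have hceq : u = c :=
        uniqU hM hxu.1 hio hu hux hc (Equiv.Perm.apply_inv_self c i)
      rw [hceq] at heq
      have hhG := memG_of_H hH
      have hv₇ : h * v₂ * h⁻¹ ∈ U i := conjU' hM hhG hv₂ (H_fix hM hH).2
      have hv₇T : Triv r (h * v₂ * h⁻¹) := Triv.conj (presG hM hhG) hv₂T
      have hA := Mcc hM hoi hτ (inv_mem hk) (Triv.inv hkT) hv₇ hv₇T
      have h2 := InA_mulHU hM hA hH hc
      rw [show c * v = k⁻¹ * (h * v₂ * h⁻¹) * h * c from by rw [heq]; group]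
      exact h2
  · exact Mv hM hoi hτ hc hv hvT

theorem stepUo (hM : IsLocalMoufangSet r U) (hoi : ¬ r.r o i)
    (hτ : ∃ e, ¬ r.r e o ∧ ¬ r.r e i ∧ IsMuMap U o i e τ) {c t : Equiv.Perm X}
    (hc : c ∈ U o) (ht : InA r U o i t ∨ InB r U o i τ t) :
    InA r U o i (c * t) ∨ InB r U o i τ (c * t) := by
  rcases ht with ⟨v, hv, h, hh, u, hu, rfl⟩ | ⟨w, hw, hwT, h, hh, u, hu, rfl⟩
  · rw [show c * (v * h * u) = (c * v) * h * u from by group]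
    exact T_mulHU hM (Mgen hM hoi hτ hc hv) hh hu
  · have hcw : c * w ∈ U o := mul_mem hc hw
    have hT : InA r U o i ((c * w) * τ) ∨ InB r U o i τ ((c * w) * τ) := by
      by_cases h2 : Triv r (c * w)
      · exact Or.inr (Ctau_B hcw h2)
      · exact Or.inl (Ctau_A hM hoi hτ hcw h2)
    rw [show c * (w * τ * h * u) = ((c * w) * τ) * h * u from by group]
    exact T_mulHU hM hT hh hu

theorem stepUi (hM : IsLocalMoufangSet r U) (hoi : ¬ r.r o i)
    (hτ : ∃ e, ¬ r.r e o ∧ ¬ r.r e i ∧ IsMuMap U o i e τ) {a t : Equiv.Perm X}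
    (ha : a ∈ U i) (ht : InA r U o i t ∨ InB r U o i τ t) :
    InA r U o i (a * t) ∨ InB r U o i τ (a * t) := by
  rcases ht with ⟨v, hv, h, hh, u, hu, rfl⟩ | ⟨w, hw, hwT, h, hh, u, hu, rfl⟩
  · exact Or.inl ⟨a * v, mul_mem ha hv, h, hh, u, hu, by group⟩
  · have hτG : τ ∈ ⨆ z : X, U z := tau_G hτ
    by_cases haT : Triv r a
    · have hC₁ : τ⁻¹ * a * τ ∈ U o := conjU'' hM hτG ha (tau_inv_i hτ)
      have hC₁T : Triv r (τ⁻¹ * a * τ) := by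
        have h2 := Triv.conj (pres_inv (presG hM hτG)) haT
        rwa [inv_inv] at h2
      have hV₁ : τ⁻¹ * w * τ ∈ U i := conjU'' hM hτG hw (tau_inv_o hτ)
      have hV₁T : Triv r (τ⁻¹ * w * τ) := by
        have h2 := Triv.conj (pres_inv (presG hM hτG)) hwT
        rwa [inv_inv] at h2
      obtain ⟨v', hv', h', hh', u', hu', heqA⟩ := Mcc hM hoi hτ hC₁ hC₁T hV₁ hV₁T
      have hv'eq : v' = (τ⁻¹ * a * τ) * (τ⁻¹ * w * τ) * u'⁻¹ * h'⁻¹ := by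
        rw [heqA]; group
      by_cases hv'T : Triv r v'
      · have hW₃ : τ * v' * τ⁻¹ ∈ U o := conjU' hM hτG hv' (tau_i hτ)
        have hW₃T : Triv r (τ * v' * τ⁻¹) := Triv.conj (presG hM hτG) hv'T
        have hcu : h⁻¹ * u' * h ∈ U o :=
          conjU'' hM (memG_of_H hh) hu' (inv_fix (H_fix hM hh).1)
        refine Or.inr ⟨τ * v' * τ⁻¹, hW₃, hW₃T, h' * h, mul_mem hh' hh,
          (h⁻¹ * u' * h) * u, mul_mem hcu hu, ?_⟩
        rw [hv'eq]; group
      · have base := tauV hM hoi hτ hv' hv'T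
        have s1 := InA_mulHU hM (InA_mulHU hM base hh' hu') hh hu
        left
        rw [show a * (w * τ * h * u) = ((τ * v') * h' * u') * h * u from by rw [hv'eq]; group]
        exact s1
    · have hnf : ¬ r.r (a o) o := fun hf => haT (trivUi hM hoi ha hf)
      obtain ⟨u₁, hu₁, c₁, hc₁, h₁, hH₁, hu₁nt, haeq⟩ := decompUi hM hoi hτ ha hnf
      have hC₂ : c₁⁻¹ * w ∈ U o := mul_mem (inv_mem hc₁) hw
      have hV₄ : τ * (c₁⁻¹ * w) * τ⁻¹ ∈ U i := conjU' hM hτG hC₂ (tau_o hτ)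
      have hh₁G := memG_of_H hH₁
      have hV₅ : h₁ * (τ * (c₁⁻¹ * w) * τ⁻¹) * h₁⁻¹ ∈ U i :=
        conjU' hM hh₁G hV₄ (H_fix hM hH₁).2
      have hM5 := Mgen hM hoi hτ (inv_mem hu₁) hV₅
      have hHmid : (h₁ * (τ * τ)) * h ∈ HuaSubgroup r U o i :=
        mul_mem (mul_mem hH₁ (tausq_H hτ)) hh
      have h2 := T_mulHU hM hM5 hHmid hu
      rw [show a * (w * τ * h * u) =
        (u₁⁻¹ * (h₁ * (τ * (c₁⁻¹ * w) * τ⁻¹) * h₁⁻¹)) * ((h₁ * (τ * τ)) * h) * u from by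
          rw [haeq]; group]
      exact h2

theorem gen2 (hM : IsLocalMoufangSet r U) (hoi : ¬ r.r o i) :
    (⨆ z : X, U z) ≤ Subgroup.closure ((U o : Set (Equiv.Perm X)) ∪ (U i : Set (Equiv.Perm X))) := by
  have hio : ¬ r.r i o := fun h => hoi (r.iseqv.symm h)
  apply iSup_le
  intro z b hb
  by_cases hzi : r.r z i
  · have hzo : ¬ r.r z o := fun h => hoi (r.iseqv.trans (r.iseqv.symm h) hzi)
    obtain ⟨c, ⟨hcU, hci⟩, -⟩ := hM.lm1 o i z hio hzo
    have hcG : c ∈ ⨆ z : X, U z := memG hcU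
    have h1 : c⁻¹ * b * c ∈ U i := by
      have h2 := conjU hM (inv_mem hcG) hb
      rw [inv_inv] at h2
      have h3 : c⁻¹ z = i := by rw [← hci, Equiv.Perm.inv_apply_self]
      rwa [h3] at h2
    have hbeq : b = c * (c⁻¹ * b * c) * c⁻¹ := by group
    rw [hbeq]
    have hcC := Subgroup.subset_closure (G := Equiv.Perm X)
      (k := (U o : Set (Equiv.Perm X)) ∪ (U i : Set (Equiv.Perm X))) (Or.inl hcU)
    exact mul_mem (mul_mem hcC (Subgroup.subset_closure (Or.inr h1))) (inv_mem hcC)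
  · obtain ⟨a, ⟨haU, hao⟩, -⟩ := hM.lm1 i o z hoi hzi
    have haG : a ∈ ⨆ z : X, U z := memG haU
    have h1 : a⁻¹ * b * a ∈ U o := by
      have h2 := conjU hM (inv_mem haG) hb
      rw [inv_inv] at h2
      have h3 : a⁻¹ z = o := by rw [← hao, Equiv.Perm.inv_apply_self]
      rwa [h3] at h2
    have hbeq : b = a * (a⁻¹ * b * a) * a⁻¹ := by group
    rw [hbeq]
    have haC := Subgroup.subset_closure (G := Equiv.Perm X)
      (k := (U o : Set (Equiv.Perm X)) ∪ (U i : Set (Equiv.Perm X))) (Or.inr haU)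
    exact mul_mem (mul_mem haC (Subgroup.subset_closure (Or.inl h1))) (inv_mem haC)

theorem mainT (hM : IsLocalMoufangSet r U) (hoi : ¬ r.r o i)
    (hτ : ∃ e, ¬ r.r e o ∧ ¬ r.r e i ∧ IsMuMap U o i e τ) {g : Equiv.Perm X}
    (hg : g ∈ ⨆ z : X, U z) : InA r U o i g ∨ InB r U o i τ g := by
  have hg2 := gen2 hM hoi hg
  clear hg
  have P : (∀ t, (InA r U o i t ∨ InB r U o i τ t) →
        (InA r U o i (g * t) ∨ InB r U o i τ (g * t))) ∧
      (∀ t, (InA r U o i t ∨ InB r U o i τ t) →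
        (InA r U o i (g⁻¹ * t) ∨ InB r U o i τ (g⁻¹ * t))) := by
    induction hg2 using Subgroup.closure_induction with
    | mem x hx =>
      rcases hx with hxo | hxi
      · exact ⟨fun t ht => stepUo hM hoi hτ hxo ht,
          fun t ht => stepUo hM hoi hτ (inv_mem hxo) ht⟩
      · exact ⟨fun t ht => stepUi hM hoi hτ hxi ht,
          fun t ht => stepUi hM hoi hτ (inv_mem hxi) ht⟩
    | one =>
      constructor
      · intro t ht; rwa [one_mul]
      · intro t ht; rwa [inv_one, one_mul]
    | mul x y hx hy ihx ihy =>
      constructor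
      · intro t ht
        rw [mul_assoc]
        exact ihx.1 _ (ihy.1 t ht)
      · intro t ht
        rw [mul_inv_rev, mul_assoc]
        exact ihy.2 _ (ihx.2 t ht)
    | inv x hx ih =>
      refine ⟨ih.2, fun t ht => ?_⟩
      rw [inv_inv]
      exact ih.1 t ht
  have h2 := P.1 1 (Or.inl ⟨1, one_mem _, 1, one_mem _, 1, one_mem _, by group⟩)
  rwa [mul_one] at h2

theorem InA_o (hM : IsLocalMoufangSet r U) (hoi : ¬ r.r o i) {g : Equiv.Perm X}
    (h : InA r U o i g) : ¬ r.r (g o) i := by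
  obtain ⟨v, hv, h₀, hh₀, u, hu, rfl⟩ := h
  have h1 : (v * h₀ * u) o = v o := by
    simp [Equiv.Perm.mul_apply, fixU hM hu, (H_fix hM hh₀).1]
  rw [h1]
  intro hcon
  exact hoi ((hM.preserves i v hv o i).mpr (by rwa [fixU hM hv]))

theorem InB_o (hM : IsLocalMoufangSet r U)
    (hτ : ∃ e, ¬ r.r e o ∧ ¬ r.r e i ∧ IsMuMap U o i e τ) {g : Equiv.Perm X}
    (h : InB r U o i τ g) : r.r (g o) i := by
  obtain ⟨w, hw, hwT, h₀, hh₀, u, hu, rfl⟩ := h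
  have h1 : (w * τ * h₀ * u) o = w i := by
    simp [Equiv.Perm.mul_apply, fixU hM hu, (H_fix hM hh₀).1, tau_o hτ]
  rw [h1]
  exact hwT i

end S7


open S7 in
/-- the Bruhat-type decomposition
`G = U 0 · H · U ∞ ⊔ U 0 · H · τ · U 0 ^∘` (a disjoint union), and consequently
`G_0 = U 0 · H` and `G_{0,∞} = H`.  (With right actions, the paper's word
`a₁ a₂ ⋯ aₙ` is our product `aₙ * ⋯ * a₁`.) -/
theorem statement7 (r : Setoid X) (U : X → Subgroup (Equiv.Perm X))
    (hM : IsLocalMoufangSet r U) (o i : X) (hoi : ¬ r.r o i)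
    (τ : Equiv.Perm X) (hτ : ∃ e, ¬ r.r e o ∧ ¬ r.r e i ∧ IsMuMap U o i e τ) :
    (∀ g ∈ (⨆ z : X, U z),
      Xor' (∃ u ∈ U o, ∃ hh ∈ HuaSubgroup r U o i, ∃ v ∈ U i, g = v * hh * u)
        (∃ u ∈ U o, ∃ hh ∈ HuaSubgroup r U o i, ∃ w ∈ U o,
          (∀ b : X, r.r (w b) b) ∧ g = w * τ * hh * u)) ∧
    (∀ g ∈ (⨆ z : X, U z),
      (g o = o ↔ ∃ u ∈ U o, ∃ hh ∈ HuaSubgroup r U o i, g = hh * u)) ∧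
    (∀ g ∈ (⨆ z : X, U z),
      ((g o = o ∧ g i = i) ↔ g ∈ HuaSubgroup r U o i)) := by
  have hio : ¬ r.r i o := fun h => hoi (r.iseqv.symm h)
  have main : ∀ g ∈ (⨆ z : X, U z), InA r U o i g ∨ InB r U o i τ g :=
    fun g hg => mainT hM hoi hτ hg
  have hfix2 : ∀ g ∈ (⨆ z : X, U z), g o = o →
      ∃ u ∈ U o, ∃ hh ∈ HuaSubgroup r U o i, g = hh * u := by
    intro g hg hgo
    rcases main g hg with hA | hB
    · obtain ⟨v, hv, h₀, hh₀, u, hu, hgeq⟩ := hA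
      have hvo : v o = o := by
        have h1 : g o = v o := by
          rw [hgeq]; simp [Equiv.Perm.mul_apply, fixU hM hu, (H_fix hM hh₀).1]
        rw [← h1, hgo]
      have hv1 : v = 1 := uniqU hM hoi hoi hv hvo (one_mem _) (Equiv.Perm.one_apply o)
      exact ⟨u, hu, h₀, hh₀, by rw [hgeq, hv1, one_mul]⟩
    · exfalso
      have h1 := InB_o hM hτ hB
      rw [hgo] at h1
      exact hoi h1
  refine ⟨?_, ?_, ?_⟩
  · intro g hg
    rcases main g hg with hA | hB
    · left
      constructor
      · obtain ⟨v, hv, h₀, hh₀, u, hu, he⟩ := hA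
        exact ⟨u, hu, h₀, hh₀, v, hv, he⟩
      · rintro ⟨u, hu, hh, hhH, w, hw, hwT, he⟩
        exact InA_o hM hoi hA (InB_o hM hτ ⟨w, hw, hwT, hh, hhH, u, hu, he⟩)
    · right
      constructor
      · obtain ⟨w, hw, hwT, h₀, hh₀, u, hu, he⟩ := hB
        exact ⟨u, hu, h₀, hh₀, w, hw, hwT, he⟩
      · rintro ⟨u, hu, hh, hhH, v, hv, he⟩
        exact InA_o hM hoi ⟨v, hv, hh, hhH, u, hu, he⟩ (InB_o hM hτ hB)
  · intro g hg
    constructor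
    · intro hgo
      exact hfix2 g hg hgo
    · rintro ⟨u, hu, hh, hhH, rfl⟩
      simp [Equiv.Perm.mul_apply, fixU hM hu, (H_fix hM hhH).1]
  · intro g hg
    constructor
    · rintro ⟨hgo, hgi⟩
      obtain ⟨u, hu, hh, hhH, hgeq⟩ := hfix2 g hg hgo
      have hui : u i = i := by
        have h1 : hh (u i) = i := by
          have h0 : (hh * u) i = i := by rw [← hgeq]; exact hgi
          rwa [Equiv.Perm.mul_apply] at h0
        calc u i = hh⁻¹ (hh (u i)) := (Equiv.Perm.inv_apply_self hh (u i)).symm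
          _ = hh⁻¹ i := by rw [h1]
          _ = i := inv_fix (H_fix hM hhH).2
      have hu1 : u = 1 := uniqU hM hio hio hu hui (one_mem _) (Equiv.Perm.one_apply i)
      rw [hgeq, hu1, mul_one]
      exact hhH
    · intro hgH
      exact ⟨(H_fix hM hgH).1, (H_fix hM hgH).2⟩
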